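/- Let φ and ψ be qpf formulas and F = fv(φ) ∩ fv(ψ). Assume φ*ψ is satisfiable and that for all x, y ∈ F the equality x = y is not a logical consequence of φ. Let η be the separating conjunction of all equalities x = y with x, y ∈ F such that x = y is a logical consequence of ψ. Then tw([[∃∃(φ*η)]]) ≤ tw([[∃∃(φ*ψ)]]) + |F|, where ∃∃χ denotes the existential closure of χ. -/

import Mathlib

/-!
Common definitions for the formalization of
"The Treewidth Boundedness Problem for an Inductive Separation Logic of Relations".
-/

namespace SLRTW

/-! ### Relational structures over a fixed universe `V` -/

/-- A structure over the relational signature given by `Rel`, `ar` with universe `V`: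
each relation symbol is interpreted as a finite set of tuples, and only finitely many
relation symbols have a nonempty interpretation. -/
structure Str (Rel : Type) (ar : Rel → ℕ) (V : Type) where
  interp : ∀ r : Rel, Set (Fin (ar r) → V)
  finite_interp : ∀ r, (interp r).Finite
  finite_active : {r : Rel | interp r ≠ ∅}.Finite

/-- Formulas of the separation logic of relations, over relation symbols `Rel` (with
arities `ar`) and predicate symbols `Pr` (with arities `pa`).  Variables are natural
numbers; by convention, the parameters of a predicate of arity `n` are `0, …, n-1`. -/
inductive SLR (Rel : Type) (ar : Rel → ℕ) (Pr : Type) (pa : Pr → ℕ) : Type where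
  | emp : SLR Rel ar Pr pa
  | eq (x y : ℕ) : SLR Rel ar Pr pa
  | ne (x y : ℕ) : SLR Rel ar Pr pa
  | rel (r : Rel) (a : Fin (ar r) → ℕ) : SLR Rel ar Pr pa
  | pred (A : Pr) (a : Fin (pa A) → ℕ) : SLR Rel ar Pr pa
  | star (φ ψ : SLR Rel ar Pr pa) : SLR Rel ar Pr pa
  | ex (x : ℕ) (φ : SLR Rel ar Pr pa) : SLR Rel ar Pr pa

/-- An RGB color scheme: a partition of the set of colors `𝒫(Rel)` into red, green
and blue colors, such that any two blue colors intersect, every green color intersects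
every blue color, and every red color is disjoint from some blue color. -/
structure RGB (Rel : Type) where
  red : Set (Set Rel)
  green : Set (Set Rel)
  blue : Set (Set Rel)
  cover : ∀ C : Set Rel, C ∈ red ∨ C ∈ green ∨ C ∈ blue
  red_green : red ∩ green = ∅
  red_blue : red ∩ blue = ∅
  green_blue : green ∩ blue = ∅
  blue_blue_meet : ∀ C1 ∈ blue, ∀ C2 ∈ blue, (C1 ∩ C2).Nonempty
  green_blue_meet : ∀ C1 ∈ green, ∀ C2 ∈ blue, (C1 ∩ C2).Nonempty
  red_sep : ∀ C1 ∈ red, ∃ C2 ∈ blue, C1 ∩ C2 = ∅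

section Defs1

variable {Rel : Type} {ar : Rel → ℕ} {V : Type} {Pr : Type} {pa : Pr → ℕ}

/-- The support of a structure: the elements occurring in some tuple. -/
def Str.supp (S : Str Rel ar V) : Set V :=
  { u | ∃ (r : Rel) (t : Fin (ar r) → V), t ∈ S.interp r ∧ ∃ i, t i = u }

/-- Two structures are locally disjoint iff their interpretations are pointwise disjoint. -/
def LocDisj (S1 S2 : Str Rel ar V) : Prop :=
  ∀ r, S1.interp r ∩ S2.interp r = ∅

/-- Composition of structures (pointwise union of the interpretations). -/
def Str.comp (S1 S2 : Str Rel ar V) : Str Rel ar V where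
  interp r := S1.interp r ∪ S2.interp r
  finite_interp r := (S1.finite_interp r).union (S2.finite_interp r)
  finite_active := by
    refine (S1.finite_active.union S2.finite_active).subset ?_
    intro r hr
    simp only [Set.mem_setOf_eq, Set.mem_union, ne_eq] at hr ⊢
    rw [Set.union_empty_iff] at hr
    tauto

/-- Composition of a finite family of structures. -/
def bigComp {n : ℕ} (Ss : Fin n → Str Rel ar V) : Str Rel ar V where
  interp r := ⋃ i, (Ss i).interp r
  finite_interp r := Set.finite_iUnion fun i => (Ss i).finite_interp r
  finite_active := by
    refine (Set.finite_iUnion fun i => (Ss i).finite_active).subset ?_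
    intro r hr
    simp only [Set.mem_setOf_eq, ne_eq, Set.iUnion_eq_empty, Set.mem_iUnion] at hr ⊢
    push_neg at hr
    obtain ⟨i, hi⟩ := hr
    exact ⟨i, Set.nonempty_iff_ne_empty.mp hi⟩

/-- A tree decomposition of a structure: a finite tree whose nodes carry finite bags of
elements, covering every tuple, and such that the set of nodes containing any given
support element is nonempty and connected. -/
structure TreeDecomp (S : Str Rel ar V) where
  ι : Type
  instFin : Fintype ι
  G : SimpleGraph ι
  isTree : G.IsTree
  bag : ι → Finset V
  bag_cover : ∀ (r : Rel), ∀ t ∈ S.interp r, ∃ n : ι, ∀ i, t i ∈ bag n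
  bag_conn : ∀ u ∈ S.supp, (SimpleGraph.induce {n : ι | u ∈ bag n} G).Connected

attribute [instance] TreeDecomp.instFin

/-- The width of a tree decomposition: maximal bag size minus one. -/
def TreeDecomp.width {S : Str Rel ar V} (T : TreeDecomp S) : ℕ :=
  (Finset.univ.sup fun n : T.ι => (T.bag n).card) - 1

/-- The treewidth of a structure: the minimal width of a tree decomposition. -/
noncomputable def tw (S : Str Rel ar V) : ℕ :=
  sInf { w | ∃ T : TreeDecomp S, T.width = w }

/-- A set of structures is treewidth-bounded iff the treewidths of its members are
bounded. -/
def TWB (𝒮 : Set (Str Rel ar V)) : Prop :=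
  ∃ k : ℕ, ∀ S ∈ 𝒮, tw S ≤ k

/-- The supremum of the treewidths of a set of structures (in `ℕ∞`). -/
noncomputable def twSet (𝒮 : Set (Str Rel ar V)) : ℕ∞ :=
  ⨆ S ∈ 𝒮, (tw S : ℕ∞)

namespace SLR

/-- Free variables of a formula. -/
def fv : SLR Rel ar Pr pa → Set ℕ
  | .emp => ∅
  | .eq x y => {x, y}
  | .ne x y => {x, y}
  | .rel _ a => Set.range a
  | .pred _ a => Set.range a
  | .star φ ψ => φ.fv ∪ ψ.fv
  | .ex x φ => φ.fv \ {x}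

/-- All variables (free or bound) occurring in a formula. -/
def vars : SLR Rel ar Pr pa → Set ℕ
  | .emp => ∅
  | .eq x y => {x, y}
  | .ne x y => {x, y}
  | .rel _ a => Set.range a
  | .pred _ a => Set.range a
  | .star φ ψ => φ.vars ∪ ψ.vars
  | .ex x φ => insert x φ.vars

/-- Predicate-free formulas. -/
def PredFree : SLR Rel ar Pr pa → Prop
  | .pred _ _ => False
  | .star φ ψ => φ.PredFree ∧ ψ.PredFree
  | .ex _ φ => φ.PredFree
  | _ => True

/-- Quantifier- and predicate-free (qpf) formulas. -/
def QPF : SLR Rel ar Pr pa → Prop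
  | .pred _ _ => False
  | .ex _ _ => False
  | .star φ ψ => φ.QPF ∧ ψ.QPF
  | _ => True

/-- Formulas containing only relation atoms. -/
def RelOnly : SLR Rel ar Pr pa → Prop
  | .rel _ _ => True
  | .star φ ψ => φ.RelOnly ∧ ψ.RelOnly
  | _ => False

/-- Formulas containing only equality atoms (and `emp`). -/
def EqOnly : SLR Rel ar Pr pa → Prop
  | .emp => True
  | .eq _ _ => True
  | .star φ ψ => φ.EqOnly ∧ ψ.EqOnly
  | _ => False

/-- Equality-free formulas: no equality atom and no predicate atom in which the same
variable occurs twice. -/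
def EqFreeF : SLR Rel ar Pr pa → Prop
  | .eq _ _ => False
  | .pred _ a => Function.Injective a
  | .star φ ψ => φ.EqFreeF ∧ ψ.EqFreeF
  | .ex _ φ => φ.EqFreeF
  | _ => True

/-- The number of predicate atoms occurring in a formula. -/
def npred : SLR Rel ar Pr pa → ℕ
  | .pred _ _ => 1
  | .star φ ψ => φ.npred + ψ.npred
  | .ex _ φ => φ.npred
  | _ => 0

/-- The number of relation atoms occurring in a formula. -/
def nrel : SLR Rel ar Pr pa → ℕ
  | .rel _ _ => 1
  | .star φ ψ => φ.nrel + ψ.nrel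
  | .ex _ φ => φ.nrel
  | _ => 0

/-- The set of relation symbols occurring in a formula. -/
def rels : SLR Rel ar Pr pa → Set Rel
  | .rel r _ => {r}
  | .star φ ψ => φ.rels ∪ ψ.rels
  | .ex _ φ => φ.rels
  | _ => ∅

/-- The set of predicate symbols occurring in a formula. -/
def preds : SLR Rel ar Pr pa → Set Pr
  | .pred A _ => {A}
  | .star φ ψ => φ.preds ∪ ψ.preds
  | .ex _ φ => φ.preds
  | _ => ∅

/-- The quantifier-free matrix of a formula (erasing all existential quantifiers). -/
def matrix : SLR Rel ar Pr pa → SLR Rel ar Pr pa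
  | .ex _ φ => φ.matrix
  | .star φ ψ => .star φ.matrix ψ.matrix
  | φ => φ

/-- The list of bound variables of a formula. -/
def binders : SLR Rel ar Pr pa → List ℕ
  | .ex x φ => x :: φ.binders
  | .star φ ψ => φ.binders ++ ψ.binders
  | _ => []

/-- A formula is well-named iff its bound variables are pairwise distinct and distinct
from its free variables.  For a well-named formula, the matrix faithfully represents
the prenex form. -/
def WellNamed (χ : SLR Rel ar Pr pa) : Prop :=
  χ.binders.Nodup ∧ ∀ x ∈ χ.binders, x ∉ χ.fv

/-- The disequality `x ≠ y` occurs in the formula (as an unordered pair). -/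
def neOccurs : SLR Rel ar Pr pa → ℕ → ℕ → Prop
  | .ne a b, x, y => (a = x ∧ b = y) ∨ (a = y ∧ b = x)
  | .star φ ψ, x, y => φ.neOccurs x y ∨ ψ.neOccurs x y
  | .ex _ φ, x, y => φ.neOccurs x y
  | _, _, _ => False

/-- The equality `x = y` occurs in the formula (as an unordered pair). -/
def eqOccurs : SLR Rel ar Pr pa → ℕ → ℕ → Prop
  | .eq a b, x, y => (a = x ∧ b = y) ∨ (a = y ∧ b = x)
  | .star φ ψ, x, y => φ.eqOccurs x y ∨ ψ.eqOccurs x y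
  | .ex _ φ, x, y => φ.eqOccurs x y
  | _, _, _ => False

end SLR

/-- The nullary predicate atom `A()` (the arguments are irrelevant when `pa A = 0`). -/
def natom (A : Pr) : SLR Rel ar Pr pa := .pred A fun _ => 0

/-- Iterated separating conjunction: `starAll φ [χ1, …, χn] = χ1 * (χ2 * … * (χn * φ))`. -/
def starAll (φ : SLR Rel ar Pr pa) : List (SLR Rel ar Pr pa) → SLR Rel ar Pr pa
  | [] => φ
  | χ :: l => .star χ (starAll φ l)

end Defs1

/-- A set of inductive definitions (SID): a finite set of rules `A(0,…,pa A - 1) ← φ`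
where the free variables of `φ` are among the parameters `0, …, pa A - 1`. -/
structure SID (Rel : Type) (ar : Rel → ℕ) (Pr : Type) (pa : Pr → ℕ) where
  rules : Pr → Set (SLR Rel ar Pr pa)
  finite_rules : {p : Pr × SLR Rel ar Pr pa | p.2 ∈ rules p.1}.Finite
  wf : ∀ A, ∀ φ ∈ rules A, SLR.fv φ ⊆ {x | x < pa A}

section Defs2

variable {Rel : Type} {ar : Rel → ℕ} {V : Type} {Pr : Type} {pa : Pr → ℕ}

/-- The empty structure predicate. -/
def EmpS (S : Str Rel ar V) : Prop := ∀ r, S.interp r = ∅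

/-- The satisfaction relation of SLR, parameterized by a store and an SID.
A predicate atom `A(y₁,…,yₙ)` is satisfied iff the body of some rule for `A` is
satisfied under the store mapping the parameter `i` to the value of `yᵢ₊₁`. -/
inductive Sat (Δ : SID Rel ar Pr pa) :
    Str Rel ar V → (ℕ → V) → SLR Rel ar Pr pa → Prop where
  | emp {S : Str Rel ar V} {s : ℕ → V} : EmpS S → Sat Δ S s .emp
  | eq {S : Str Rel ar V} {s : ℕ → V} {x y : ℕ} :
      EmpS S → s x = s y → Sat Δ S s (.eq x y)
  | ne {S : Str Rel ar V} {s : ℕ → V} {x y : ℕ} :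
      EmpS S → s x ≠ s y → Sat Δ S s (.ne x y)
  | rel {S : Str Rel ar V} {s : ℕ → V} {r : Rel} {a : Fin (ar r) → ℕ} :
      S.interp r = {fun i => s (a i)} → (∀ r', r' ≠ r → S.interp r' = ∅) →
      Sat Δ S s (.rel r a)
  | pred {S : Str Rel ar V} {s : ℕ → V} {A : Pr} {a : Fin (pa A) → ℕ}
      {body : SLR Rel ar Pr pa} :
      body ∈ Δ.rules A →
      Sat Δ S (fun n => if h : n < pa A then s (a ⟨n, h⟩) else s n) body →
      Sat Δ S s (.pred A a)
  | star {S1 S2 : Str Rel ar V} {s : ℕ → V} {φ ψ : SLR Rel ar Pr pa} :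
      LocDisj S1 S2 → Sat Δ S1 s φ → Sat Δ S2 s ψ →
      Sat Δ (S1.comp S2) s (.star φ ψ)
  | ex {S : Str Rel ar V} {s : ℕ → V} {x : ℕ} {φ : SLR Rel ar Pr pa} (u : V) :
      Sat Δ S (Function.update s x u) φ → Sat Δ S s (.ex x φ)

/-- The set of `Δ`-models of a sentence (over universe `V`). -/
def SMod (Δ : SID Rel ar Pr pa) (φ : SLR Rel ar Pr pa) : Set (Str Rel ar V) :=
  { S | ∃ s : ℕ → V, Sat Δ S s φ }

/-- `IsSubst f φ φ'` holds iff `φ'` is obtained from `φ` by the capture-avoiding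
substitution of `f x` for each free variable `x`, the bound variables being renamed
to avoid clashes. -/
inductive IsSubst : (ℕ → ℕ) → SLR Rel ar Pr pa → SLR Rel ar Pr pa → Prop where
  | emp {f : ℕ → ℕ} : IsSubst f .emp .emp
  | eq {f : ℕ → ℕ} {x y : ℕ} : IsSubst f (.eq x y) (.eq (f x) (f y))
  | ne {f : ℕ → ℕ} {x y : ℕ} : IsSubst f (.ne x y) (.ne (f x) (f y))
  | rel {f : ℕ → ℕ} {r : Rel} {a : Fin (ar r) → ℕ} :
      IsSubst f (.rel r a) (.rel r (f ∘ a))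
  | pred {f : ℕ → ℕ} {A : Pr} {a : Fin (pa A) → ℕ} :
      IsSubst f (.pred A a) (.pred A (f ∘ a))
  | star {f : ℕ → ℕ} {φ ψ φ' ψ' : SLR Rel ar Pr pa} :
      IsSubst f φ φ' → IsSubst f ψ ψ' → IsSubst f (.star φ ψ) (.star φ' ψ')
  | ex {f : ℕ → ℕ} {x z : ℕ} {φ φ' : SLR Rel ar Pr pa} :
      (∀ y ∈ SLR.fv φ, y ≠ x → f y ≠ z) →
      IsSubst (Function.update f x z) φ φ' →
      IsSubst f (.ex x φ) (.ex z φ')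

/-- One unfolding step: replace one predicate atom `A(y₁,…,yₙ)` by the body of a rule
for `A`, with the parameters substituted by `y₁,…,yₙ` (bound variables renamed to
avoid clashes). -/
inductive Step (Δ : SID Rel ar Pr pa) : SLR Rel ar Pr pa → SLR Rel ar Pr pa → Prop where
  | unfold {A : Pr} {a : Fin (pa A) → ℕ} {body ψ : SLR Rel ar Pr pa} :
      body ∈ Δ.rules A →
      IsSubst (fun n => if h : n < pa A then a ⟨n, h⟩ else n) body ψ →
      Step Δ (.pred A a) ψ
  | starL {φ φ' ψ : SLR Rel ar Pr pa} : Step Δ φ φ' → Step Δ (.star φ ψ) (.star φ' ψ)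
  | starR {φ ψ ψ' : SLR Rel ar Pr pa} : Step Δ ψ ψ' → Step Δ (.star φ ψ) (.star φ ψ')
  | exC {x : ℕ} {φ φ' : SLR Rel ar Pr pa} : Step Δ φ φ' → Step Δ (.ex x φ) (.ex x φ')

/-- `Δ`-unfolding: the reflexive-transitive closure of unfolding steps. -/
def Unfolds (Δ : SID Rel ar Pr pa) : SLR Rel ar Pr pa → SLR Rel ar Pr pa → Prop :=
  Relation.ReflTransGen (Step Δ)

/-- `x = y` is a logical consequence of `ψ`. -/
def EqConseq (Δ : SID Rel ar Pr pa) (ψ : SLR Rel ar Pr pa) (x y : ℕ) : Prop :=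
  ∀ (S : Str Rel ar V) (s : ℕ → V), Sat Δ S s ψ → s x = s y

/-- A store is canonical for `ψ` iff it identifies only variables that are equated as a
logical consequence of `ψ`. -/
def CanonicalStore (Δ : SID Rel ar Pr pa) (s : ℕ → V) (ψ : SLR Rel ar Pr pa) : Prop :=
  ∀ x ∈ ψ.fv, ∀ y ∈ ψ.fv, s x = s y → EqConseq (V := V) Δ ψ x y

/-- `(S, d)` is a rich canonical `Δ`-model of `φ`: for some complete `Δ`-unfolding of
`φ` into a well-named predicate-free formula `χ` (i.e. of the form `∃x⃗.ψ` with `ψ` qpf,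
up to hoisting of quantifiers) and some store canonical for the matrix `ψ`, the
structure `S` satisfies `ψ` and `d` records the disequalities of `ψ` under the store. -/
def RichCanonical (Δ : SID Rel ar Pr pa) (φ : SLR Rel ar Pr pa)
    (S : Str Rel ar V) (d : V → V → Prop) : Prop :=
  ∃ χ : SLR Rel ar Pr pa, Unfolds Δ φ χ ∧ χ.PredFree ∧ χ.WellNamed ∧
    ∃ s : ℕ → V, CanonicalStore Δ s χ.matrix ∧ Sat Δ S s χ.matrix ∧
      ∀ u v : V, d u v ↔ ∃ x y : ℕ, s x = u ∧ s y = v ∧ χ.matrix.neOccurs x y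

/-- The set of canonical `Δ`-models of `φ`. -/
def Canonical (Δ : SID Rel ar Pr pa) (φ : SLR Rel ar Pr pa) : Set (Str Rel ar V) :=
  { S | ∃ d, RichCanonical Δ φ S d }

/-- `S1` is a substructure of `S2`: its interpretation consists exactly of the tuples of
`S2` all of whose elements belong to the support of `S1`. -/
def Substr (S1 S2 : Str Rel ar V) : Prop :=
  ∀ r, S1.interp r = { t ∈ S2.interp r | ∀ i, t i ∈ S1.supp }

/-- Two elements touch iff they occur in a common tuple. -/
def Touching (S : Str Rel ar V) (u v : V) : Prop :=
  ∃ (r : Rel) (t : Fin (ar r) → V), t ∈ S.interp r ∧ (∃ i, t i = u) ∧ ∃ j, t j = v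

/-- A structure is connected iff any two support elements are joined by a path of
pairwise overlapping tuples. -/
def ConnectedS (S : Str Rel ar V) : Prop :=
  ∀ u ∈ S.supp, ∀ v ∈ S.supp, Relation.ReflTransGen (Touching S) u v

/-- `S1` is a maximally connected substructure of `S2`. -/
def MaxConn (S1 S2 : Str Rel ar V) : Prop :=
  Substr S1 S2 ∧ ConnectedS S1 ∧
    ∀ S1' : Str Rel ar V, Substr S1' S2 → ConnectedS S1' → Substr S1 S1' → S1 = S1'

/-- The set of maximally connected substructures of a structure. -/
def split (S : Str Rel ar V) : Set (Str Rel ar V) := { S' | MaxConn S' S }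

/-- `split`, lifted to sets of structures. -/
def splitSet (𝒮 : Set (Str Rel ar V)) : Set (Str Rel ar V) := ⋃ S ∈ 𝒮, split S

/-- The smallest equivalence relation containing `R`. -/
def EqvOf (R : V → V → Prop) (a b : V) : Prop :=
  ∀ E : V → V → Prop, Equivalence E → (∀ x y, R x y → E x y) → E a b

/-- An equivalence relation is compatible with a structure iff any two distinct tuples of
the interpretation of a relation symbol differ at some position modulo the relation. -/
def CompatibleE (S : Str Rel ar V) (E : V → V → Prop) : Prop :=
  ∀ r, ∀ t1 ∈ S.interp r, ∀ t2 ∈ S.interp r, t1 ≠ t2 → ∃ i, ¬ E (t1 i) (t2 i)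

/-- The image of a structure under a map on elements. -/
def mapStr (h : V → V) (S : Str Rel ar V) : Str Rel ar V where
  interp r := (fun t => h ∘ t) '' S.interp r
  finite_interp r := (S.finite_interp r).image _
  finite_active := by
    refine S.finite_active.subset ?_
    intro r hr
    simp only [Set.mem_setOf_eq, ne_eq] at hr ⊢
    intro h0
    exact hr (by rw [h0, Set.image_empty])

/-- `S'` is (a copy over `V` of) the quotient of `S` by the equivalence relation `E`. -/
def QuotBy (S : Str Rel ar V) (E : V → V → Prop) (S' : Str Rel ar V) : Prop :=
  ∃ h : V → V, (∀ u ∈ S.supp, ∀ v ∈ S.supp, (E u v ↔ h u = h v)) ∧ S' = mapStr h S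

/-- `S'` is an isomorphic copy of `S` (over the same universe `V`). -/
def IsoCopy (S S' : Str Rel ar V) : Prop :=
  ∃ h : V → V, Set.InjOn h S.supp ∧ S' = mapStr h S

/-- A matching: a set of pairs such that distinct pairs share no element. -/
def IsMatching (M : Set (V × V)) : Prop :=
  ∀ p ∈ M, ∀ q ∈ M, p ≠ q → ({p.1, p.2} ∩ {q.1, q.2} : Set V) = ∅

/-- The set of internal fusions of a structure: quotients by compatible equivalence
relations (up to isomorphism). -/
def IntFusion (S : Str Rel ar V) : Set (Str Rel ar V) :=
  { S' | ∃ E : V → V → Prop, Equivalence E ∧ CompatibleE S E ∧ QuotBy S E S' }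

/-- Internal fusions of members of a set of structures. -/
def ifSet (𝒮 : Set (Str Rel ar V)) : Set (Str Rel ar V) := ⋃ S ∈ 𝒮, IntFusion S

/-- Internal fusions of a rich canonical model: quotients by compatible equivalence
relations that do not violate the disequality relation `d`. -/
def SIntFusion (S : Str Rel ar V) (d : V → V → Prop) : Set (Str Rel ar V) :=
  { S' | ∃ E : V → V → Prop, Equivalence E ∧ CompatibleE S E ∧
      (∀ u v, d u v → ¬ E u v) ∧ QuotBy S E S' }

/-- External fusions of two structures: quotients of the composition of disjoint
isomorphic copies by the smallest equivalence relation containing a nonempty matching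
between supports that is compatible with the composition. -/
def ExtFusion (S1 S2 : Str Rel ar V) : Set (Str Rel ar V) :=
  { S' | ∃ (S1' S2' : Str Rel ar V) (M : Set (V × V)),
      IsoCopy S1 S1' ∧ IsoCopy S2 S2' ∧ S1'.supp ∩ S2'.supp = ∅ ∧
      M.Nonempty ∧ IsMatching M ∧ (∀ p ∈ M, p.1 ∈ S1'.supp ∧ p.2 ∈ S2'.supp) ∧
      CompatibleE (S1'.comp S2') (EqvOf fun a b => (a, b) ∈ M) ∧
      QuotBy (S1'.comp S2') (EqvOf fun a b => (a, b) ∈ M) S' }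

/-- Single-pair external fusions: external fusions whose matching is a single pair. -/
def ExtFusion1 (S1 S2 : Str Rel ar V) : Set (Str Rel ar V) :=
  { S' | ∃ (S1' S2' : Str Rel ar V) (M : Set (V × V)),
      IsoCopy S1 S1' ∧ IsoCopy S2 S2' ∧ S1'.supp ∩ S2'.supp = ∅ ∧
      (∃ p : V × V, M = {p}) ∧ IsMatching M ∧
      (∀ p ∈ M, p.1 ∈ S1'.supp ∧ p.2 ∈ S2'.supp) ∧
      CompatibleE (S1'.comp S2') (EqvOf fun a b => (a, b) ∈ M) ∧
      QuotBy (S1'.comp S2') (EqvOf fun a b => (a, b) ∈ M) S' }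

/-- Closure of a set of structures under external fusions (structures being identified
up to isomorphism). -/
inductive efStar (𝒮 : Set (Str Rel ar V)) : Str Rel ar V → Prop where
  | base {S : Str Rel ar V} : S ∈ 𝒮 → efStar 𝒮 S
  | iso {S S' : Str Rel ar V} : efStar 𝒮 S → IsoCopy S S' → efStar 𝒮 S'
  | fuse {S1 S2 S : Str Rel ar V} :
      efStar 𝒮 S1 → efStar 𝒮 S2 → S ∈ ExtFusion S1 S2 → efStar 𝒮 S

def efStarSet (𝒮 : Set (Str Rel ar V)) : Set (Str Rel ar V) := { S | efStar 𝒮 S }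

/-- Closure of a set of structures under single-pair external fusions. -/
inductive ef1Star (𝒮 : Set (Str Rel ar V)) : Str Rel ar V → Prop where
  | base {S : Str Rel ar V} : S ∈ 𝒮 → ef1Star 𝒮 S
  | iso {S S' : Str Rel ar V} : ef1Star 𝒮 S → IsoCopy S S' → ef1Star 𝒮 S'
  | fuse {S1 S2 S : Str Rel ar V} :
      ef1Star 𝒮 S1 → ef1Star 𝒮 S2 → S ∈ ExtFusion1 S1 S2 → ef1Star 𝒮 S

def ef1StarSet (𝒮 : Set (Str Rel ar V)) : Set (Str Rel ar V) := { S | ef1Star 𝒮 S }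

/-- Closure of a set of structures under both internal and external fusions. -/
inductive iefStar (𝒮 : Set (Str Rel ar V)) : Str Rel ar V → Prop where
  | base {S : Str Rel ar V} : S ∈ 𝒮 → iefStar 𝒮 S
  | iso {S S' : Str Rel ar V} : iefStar 𝒮 S → IsoCopy S S' → iefStar 𝒮 S'
  | fuse {S1 S2 S : Str Rel ar V} :
      iefStar 𝒮 S1 → iefStar 𝒮 S2 → S ∈ ExtFusion S1 S2 → iefStar 𝒮 S
  | intf {S1 S : Str Rel ar V} : iefStar 𝒮 S1 → S ∈ IntFusion S1 → iefStar 𝒮 S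

def iefStarSet (𝒮 : Set (Str Rel ar V)) : Set (Str Rel ar V) := { S | iefStar 𝒮 S }

/-- The color of an element: the set of relation symbols whose interpretation contains
the constant tuple at this element. -/
def color (S : Str Rel ar V) (u : V) : Set Rel :=
  { r : Rel | (fun _ => u) ∈ S.interp r }

/-- The multiplicity of a color in the multiset color abstraction of a structure. -/
noncomputable def colorMult (S : Str Rel ar V) (C : Set Rel) : ℕ :=
  {u ∈ S.supp | color S u = C}.ncard

/-- The `k`-multiset color abstraction of a structure: the sub-multisets of cardinality
at most `k` of the multiset of colors of its support elements. -/
noncomputable def MkOf (k : ℕ) (S : Str Rel ar V) : Set (Multiset (Set Rel)) :=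
  { M | Multiset.card M ≤ k ∧
      ∀ C : Set Rel, @Multiset.count _ (Classical.decEq _) C M ≤ colorMult S C }

/-- The `k`-multiset color abstraction, lifted to sets of structures. -/
noncomputable def MkSet (k : ℕ) (𝒮 : Set (Str Rel ar V)) : Set (Multiset (Set Rel)) :=
  ⋃ S ∈ 𝒮, MkOf k S

/-- A set of structures conforms to an RGB color scheme iff (1) in any member, if some
support element has a red color then all other support elements have blue colors, and
(2) in any external fusion of members, every green color occurs at most twice. -/
def Conforms (𝒮 : Set (Str Rel ar V)) (P : RGB Rel) : Prop :=
  (∀ S ∈ 𝒮, ∀ u ∈ S.supp, color S u ∈ P.red →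
      ∀ v ∈ S.supp, v ≠ u → color S v ∈ P.blue) ∧
  (∀ S ∈ efStarSet 𝒮, ∀ C ∈ P.green, colorMult S C ≤ 2)

/-- Type `R` structures: only blue and red colors, with exactly one red element. -/
def TypeR (P : RGB Rel) (S : Str Rel ar V) : Prop :=
  (∀ u ∈ S.supp, color S u ∈ P.blue ∨ color S u ∈ P.red) ∧
  {u ∈ S.supp | color S u ∈ P.red}.ncard = 1

/-- Type `G` structures: only blue and green colors, with at least one green element. -/
def TypeG (P : RGB Rel) (S : Str Rel ar V) : Prop :=
  (∀ u ∈ S.supp, color S u ∈ P.blue ∨ color S u ∈ P.green) ∧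
  {u ∈ S.supp | color S u ∈ P.green}.Nonempty

/-- Type `B` structures: only blue colors. -/
def TypeB (P : RGB Rel) (S : Str Rel ar V) : Prop :=
  ∀ u ∈ S.supp, color S u ∈ P.blue

namespace SID

/-- The set of predicate symbols occurring in an SID. -/
def predsOf (Δ : SID Rel ar Pr pa) : Set Pr :=
  {A | Δ.rules A ≠ ∅} ∪ ⋃ A, ⋃ φ ∈ Δ.rules A, SLR.preds φ

/-- The set of relation symbols occurring in an SID. -/
def relsOf (Δ : SID Rel ar Pr pa) : Set Rel :=
  ⋃ A, ⋃ φ ∈ Δ.rules A, SLR.rels φ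

/-- The number of predicate symbols occurring in an SID. -/
noncomputable def Pcount (Δ : SID Rel ar Pr pa) : ℕ := Δ.predsOf.ncard

/-- The number of relation symbols occurring in an SID. -/
noncomputable def Rcount (Δ : SID Rel ar Pr pa) : ℕ := Δ.relsOf.ncard

/-- The maximum number of variables (free or existentially quantified) occurring in a
rule of the SID. -/
noncomputable def maxvar (Δ : SID Rel ar Pr pa) : ℕ :=
  sSup { n | ∃ A, ∃ φ ∈ Δ.rules A, n = ({x | x < pa A} ∪ SLR.vars φ).ncard }

/-- The maximum number of predicate atoms occurring in a rule of the SID. -/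
noncomputable def maxpredatoms (Δ : SID Rel ar Pr pa) : ℕ :=
  sSup { n | ∃ A, ∃ φ ∈ Δ.rules A, n = SLR.npred φ }

/-- The maximum number of relation atoms occurring in a rule of the SID. -/
noncomputable def maxrelatoms (Δ : SID Rel ar Pr pa) : ℕ :=
  sSup { n | ∃ A, ∃ φ ∈ Δ.rules A, n = SLR.nrel φ }

/-- The maximum arity of a relation symbol occurring in the SID. -/
noncomputable def maxrelarity (Δ : SID Rel ar Pr pa) : ℕ :=
  sSup { n | ∃ r ∈ Δ.relsOf, n = ar r }

/-- The maximum arity of a predicate symbol occurring in the SID. -/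
noncomputable def maxpredarity (Δ : SID Rel ar Pr pa) : ℕ :=
  sSup { n | ∃ A ∈ Δ.predsOf, n = pa A }

/-- An SID is equality-free iff all its rules are equality-free. -/
def EqFree (Δ : SID Rel ar Pr pa) : Prop :=
  ∀ A, ∀ φ ∈ Δ.rules A, SLR.EqFreeF φ

end SID

/-- An SID is all-satisfiable for a nullary predicate `A` iff every predicate-free
outcome of a complete unfolding of `A` is satisfiable. -/
def AllSat (Δ : SID Rel ar Pr pa) (A : Pr) : Prop :=
  ∀ χ : SLR Rel ar Pr pa, Unfolds Δ (natom A) χ → χ.PredFree →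
    ∃ (S : Str Rel ar V) (s : ℕ → V), Sat Δ S s χ

/-- An SID is expandable for a nullary predicate `A`: any finite family of pairwise
disjoint canonical models embeds, as a substructure, into a rich canonical model, in a
way that neither disequalities nor overlapping tuples connect two distinct members. -/
def Expandable (Δ : SID Rel ar Pr pa) (A : Pr) : Prop :=
  ∀ (n : ℕ) (Ss : Fin n → Str Rel ar V),
    (∀ i, Ss i ∈ Canonical (V := V) Δ (natom A)) →
    (∀ i j, i ≠ j → (Ss i).supp ∩ (Ss j).supp = ∅) →
    ∃ (S : Str Rel ar V) (d : V → V → Prop),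
      RichCanonical Δ (natom A) S d ∧
      Substr (bigComp Ss) S ∧
      (∀ i j : Fin n, i < j → ∀ u ∈ (Ss i).supp, ∀ v ∈ (Ss j).supp, ¬ d u v) ∧
      ¬ ∃ (r : Rel) (t1 t2 : Fin (ar r) → V) (i j : Fin n),
          t1 ∈ S.interp r ∧ t2 ∈ S.interp r ∧ i < j ∧
          (∃ k, t1 k ∈ (Ss i).supp) ∧ (∃ k, t2 k ∈ (Ss j).supp) ∧ ∃ k l, t1 k = t2 l

/-- The set of structures obtained by internal fusion of rich canonical `Δ`-models. -/
def sifSet (Δ : SID Rel ar Pr pa) (φ : SLR Rel ar Pr pa) : Set (Str Rel ar V) :=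
  { S' | ∃ (S : Str Rel ar V) (d : V → V → Prop),
      RichCanonical Δ φ S d ∧ S' ∈ SIntFusion S d }

end Defs2

end SLRTW

namespace SLRTW


section AuxTW

variable {Rel : Type} {ar : Rel → ℕ} {V : Type} {Pr : Type} {pa : Pr → ℕ}

lemma Str.ext' {S1 S2 : Str Rel ar V} (h : ∀ r, S1.interp r = S2.interp r) : S1 = S2 := by
  cases S1; cases S2
  simp only [Str.mk.injEq]
  exact funext h

/-- The empty structure. -/
def emptyStr : Str Rel ar V where
  interp _ := ∅
  finite_interp _ := Set.finite_empty
  finite_active := by simp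

/-- The singleton structure interpreting `r` by the single tuple `t`. -/
def atomStr (r : Rel) (t : Fin (ar r) → V) : Str Rel ar V where
  interp r' := {t' | ∃ _ : r = r', HEq t' t}
  finite_interp r' := by
    apply Set.Subsingleton.finite
    rintro a ⟨h1, ha⟩ b ⟨h2, hb⟩
    subst h1
    rw [eq_of_heq ha, eq_of_heq hb]
  finite_active := by
    apply (Set.finite_singleton r).subset
    intro r' hr'
    simp only [Set.mem_setOf_eq, ne_eq] at hr'
    rw [Set.mem_singleton_iff]
    by_contra hne
    apply hr'
    ext t'
    simp only [Set.mem_setOf_eq, Set.mem_empty_iff_false, iff_false, not_exists]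
    intro h _
    exact hne h.symm

lemma atomStr_interp_self (r : Rel) (t : Fin (ar r) → V) :
    (atomStr r t).interp r = {t} := by
  ext t'
  constructor
  · rintro ⟨_, h⟩
    exact eq_of_heq h
  · rintro rfl
    exact ⟨rfl, HEq.rfl⟩

lemma atomStr_interp_ne {r r' : Rel} (h : r ≠ r') (t : Fin (ar r) → V) :
    (atomStr r t).interp r' = ∅ := by
  ext t'
  simp only [Set.mem_empty_iff_false, iff_false]
  rintro ⟨h1, -⟩
  exact h h1

/-- The canonical structure of a qpf formula under a store. -/
def strOf : SLR Rel ar Pr pa → (ℕ → V) → Str Rel ar V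
  | .emp, _ => emptyStr
  | .eq _ _, _ => emptyStr
  | .ne _ _, _ => emptyStr
  | .rel r a, s => atomStr r (fun i => s (a i))
  | .pred _ _, _ => emptyStr
  | .star χ1 χ2, s => (strOf χ1 s).comp (strOf χ2 s)
  | .ex _ _, _ => emptyStr

/-- The store-level constraints of a qpf formula. -/
def Csat (V : Type) : SLR Rel ar Pr pa → (ℕ → V) → Prop
  | .emp, _ => True
  | .eq x y, s => s x = s y
  | .ne x y, s => s x ≠ s y
  | .rel _ _, _ => True
  | .pred _ _, _ => False
  | .star χ1 χ2, s => Csat V χ1 s ∧ Csat V χ2 s ∧ LocDisj (strOf χ1 s) (strOf χ2 s)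
  | .ex _ _, _ => False

lemma sat_of_csat {Δ : SID Rel ar Pr pa} {s : ℕ → V} :
    ∀ {χ : SLR Rel ar Pr pa}, χ.QPF → Csat V χ s → Sat Δ (strOf χ s) s χ := by
  intro χ
  induction χ with
  | emp => exact fun _ _ => .emp fun _ => rfl
  | eq x y => exact fun _ h => .eq (fun _ => rfl) h
  | ne x y => exact fun _ h => .ne (fun _ => rfl) h
  | rel r a =>
      exact fun _ _ => .rel (atomStr_interp_self r _)
        (fun r' hr' => atomStr_interp_ne (Ne.symm hr') _)
  | pred A a => exact fun hq _ => hq.elim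
  | star χ1 χ2 ih1 ih2 =>
      exact fun hq h => .star h.2.2 (ih1 hq.1 h.1) (ih2 hq.2 h.2.1)
  | ex x χ ih => exact fun hq _ => hq.elim

lemma sat_strOf_csat {Δ : SID Rel ar Pr pa} {s : ℕ → V} :
    ∀ {χ : SLR Rel ar Pr pa} {S : Str Rel ar V}, χ.QPF → Sat Δ S s χ →
      S = strOf χ s ∧ Csat V χ s := by
  intro χ
  induction χ with
  | emp =>
      intro S _ h
      cases h with | emp he => exact ⟨Str.ext' fun r => he r, trivial⟩
  | eq x y =>
      intro S _ h
      cases h with | eq he hxy => exact ⟨Str.ext' fun r => he r, hxy⟩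
  | ne x y =>
      intro S _ h
      cases h with | ne he hxy => exact ⟨Str.ext' fun r => he r, hxy⟩
  | rel r a =>
      intro S _ h
      cases h with | rel h1 h2 =>
        refine ⟨Str.ext' fun r' => ?_, trivial⟩
        show S.interp r' = (atomStr r (fun i => s (a i))).interp r'
        by_cases hrr : r' = r
        · subst hrr
          rw [h1, atomStr_interp_self]
        · rw [h2 r' hrr, atomStr_interp_ne (Ne.symm hrr)]
  | pred A a => exact fun hq _ => hq.elim
  | star χ1 χ2 ih1 ih2 =>
      intro S hq h
      cases h with | star hd h1 h2 =>
        obtain ⟨e1, c1⟩ := ih1 hq.1 h1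
        obtain ⟨e2, c2⟩ := ih2 hq.2 h2
        subst e1; subst e2
        exact ⟨rfl, c1, c2, hd⟩
  | ex x χ ih => exact fun hq _ => hq.elim

lemma mem_strOf {s : ℕ → V} {r : Rel} {t : Fin (ar r) → V} :
    ∀ {χ : SLR Rel ar Pr pa}, t ∈ (strOf χ s).interp r →
      ∃ a : Fin (ar r) → ℕ, (∀ i, a i ∈ χ.fv) ∧ t = (fun i => s (a i)) ∧
        ∀ s' : ℕ → V, (fun i => s' (a i)) ∈ (strOf χ s').interp r := by
  intro χ
  induction χ with
  | rel r' a' =>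
      intro ht
      obtain ⟨hr, hheq⟩ := ht
      subst hr
      exact ⟨a', fun i => Set.mem_range_self i, eq_of_heq hheq, fun s' => ⟨rfl, HEq.rfl⟩⟩
  | star χ1 χ2 ih1 ih2 =>
      intro ht
      have ht' : t ∈ (strOf χ1 s).interp r ∨ t ∈ (strOf χ2 s).interp r := ht
      rcases ht' with ht' | ht'
      · obtain ⟨a, hfv, heq, hmem⟩ := ih1 ht'
        exact ⟨a, fun i => Set.mem_union_left _ (hfv i), heq,
          fun s' => Set.mem_union_left _ (hmem s')⟩
      · obtain ⟨a, hfv, heq, hmem⟩ := ih2 ht'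
        exact ⟨a, fun i => Set.mem_union_right _ (hfv i), heq,
          fun s' => Set.mem_union_right _ (hmem s')⟩
  | emp => exact fun ht => absurd ht (Set.notMem_empty t)
  | eq x y => exact fun ht => absurd ht (Set.notMem_empty t)
  | ne x y => exact fun ht => absurd ht (Set.notMem_empty t)
  | pred A a => exact fun ht => absurd ht (Set.notMem_empty t)
  | ex x χ ih => exact fun ht => absurd ht (Set.notMem_empty t)

lemma strOf_congr {s1 s2 : ℕ → V} :
    ∀ {χ : SLR Rel ar Pr pa}, (∀ x ∈ χ.fv, s1 x = s2 x) → strOf χ s1 = strOf χ s2 := by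
  intro χ
  induction χ with
  | rel r a =>
      intro h
      show atomStr r _ = atomStr r _
      congr 1
      funext i
      exact h (a i) (Set.mem_range_self i)
  | star χ1 χ2 ih1 ih2 =>
      intro h
      show Str.comp _ _ = Str.comp _ _
      rw [ih1 (fun x hx => h x (Set.mem_union_left _ hx)),
        ih2 (fun x hx => h x (Set.mem_union_right _ hx))]
  | emp => exact fun _ => rfl
  | eq x y => exact fun _ => rfl
  | ne x y => exact fun _ => rfl
  | pred A a => exact fun _ => rfl
  | ex x χ ih => exact fun _ => rfl

lemma mapStr_comp (g : V → V) (S1 S2 : Str Rel ar V) :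
    mapStr g (S1.comp S2) = (mapStr g S1).comp (mapStr g S2) :=
  Str.ext' fun r => Set.image_union _ _ _

lemma mapStr_emptyStr (g : V → V) : mapStr g (emptyStr : Str Rel ar V) = emptyStr :=
  Str.ext' fun r => Set.image_empty _

lemma mapStr_atomStr (g : V → V) (r : Rel) (t : Fin (ar r) → V) :
    mapStr g (atomStr r t) = atomStr r (fun i => g (t i)) := by
  refine Str.ext' fun r' => ?_
  by_cases hrr : r = r'
  · subst hrr
    show (fun t' => g ∘ t') '' (atomStr r t).interp r = _
    rw [atomStr_interp_self, atomStr_interp_self, Set.image_singleton]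
    rfl
  · show (fun t' => g ∘ t') '' (atomStr r t).interp r' = _
    rw [atomStr_interp_ne hrr, atomStr_interp_ne hrr, Set.image_empty]

lemma mapStr_strOf (g : V → V) :
    ∀ {χ : SLR Rel ar Pr pa} (s : ℕ → V),
      mapStr g (strOf χ s) = strOf χ (fun v => g (s v)) := by
  intro χ
  induction χ with
  | rel r a => exact fun s => mapStr_atomStr g r _
  | star χ1 χ2 ih1 ih2 =>
      intro s
      show mapStr g (Str.comp _ _) = Str.comp _ _
      rw [mapStr_comp, ih1 s, ih2 s]
  | emp => exact fun s => mapStr_emptyStr g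
  | eq x y => exact fun s => mapStr_emptyStr g
  | ne x y => exact fun s => mapStr_emptyStr g
  | pred A a => exact fun s => mapStr_emptyStr g
  | ex x χ ih => exact fun s => mapStr_emptyStr g

lemma csat_eqOccurs {s : ℕ → V} :
    ∀ {χ : SLR Rel ar Pr pa}, Csat V χ s → ∀ {x y}, χ.eqOccurs x y → s x = s y := by
  intro χ
  induction χ with
  | eq a b =>
      intro h x y he
      rcases he with ⟨rfl, rfl⟩ | ⟨rfl, rfl⟩
      · exact h
      · exact h.symm
  | star χ1 χ2 ih1 ih2 =>
      intro h x y he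
      rcases he with he | he
      · exact ih1 h.1 he
      · exact ih2 h.2.1 he
  | emp => intro _ x y he; exact he.elim
  | ne a b => intro _ x y he; exact he.elim
  | rel r a => intro _ x y he; exact he.elim
  | pred A a => intro h; exact h.elim
  | ex z χ ih => intro h; exact h.elim

lemma eqOccurs_mem_fv :
    ∀ {χ : SLR Rel ar Pr pa}, χ.QPF → ∀ {x y : ℕ}, χ.eqOccurs x y →
      x ∈ χ.fv ∧ y ∈ χ.fv := by
  intro χ
  induction χ with
  | eq a b =>
      intro _ x y he
      rcases he with ⟨rfl, rfl⟩ | ⟨rfl, rfl⟩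
      · exact ⟨Set.mem_insert _ _, Set.mem_insert_of_mem _ rfl⟩
      · exact ⟨Set.mem_insert_of_mem _ rfl, Set.mem_insert _ _⟩
  | star χ1 χ2 ih1 ih2 =>
      intro hq x y he
      rcases he with he | he
      · obtain ⟨h1, h2⟩ := ih1 hq.1 he
        exact ⟨Set.mem_union_left _ h1, Set.mem_union_left _ h2⟩
      · obtain ⟨h1, h2⟩ := ih2 hq.2 he
        exact ⟨Set.mem_union_right _ h1, Set.mem_union_right _ h2⟩
  | emp => intro _ x y he; exact he.elim
  | ne a b => intro _ x y he; exact he.elim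
  | rel r a => intro _ x y he; exact he.elim
  | pred A a => intro hq; exact hq.elim
  | ex z χ ih => intro hq; exact hq.elim

lemma eqOccurs_conseq {Δ : SID Rel ar Pr pa} {χ : SLR Rel ar Pr pa} (hq : χ.QPF)
    {x y : ℕ} (he : χ.eqOccurs x y) : EqConseq (V := V) Δ χ x y :=
  fun _ s hS => csat_eqOccurs (V := V) (sat_strOf_csat hq hS).2 he

lemma empS_comp {S1 S2 : Str Rel ar V} (h1 : EmpS S1) (h2 : EmpS S2) : EmpS (S1.comp S2) := by
  intro r
  show S1.interp r ∪ S2.interp r = ∅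
  rw [h1 r, h2 r, Set.union_empty]

lemma eqOnly_sat {Δ : SID Rel ar Pr pa} {s : ℕ → V} :
    ∀ {χ : SLR Rel ar Pr pa} {S : Str Rel ar V}, χ.EqOnly → Sat Δ S s χ →
      EmpS S ∧ ∀ x y, χ.eqOccurs x y → s x = s y := by
  intro χ
  induction χ with
  | emp =>
      intro S _ h
      cases h with | emp he => exact ⟨he, fun x y hxy => hxy.elim⟩
  | eq a b =>
      intro S _ h
      cases h with | eq he hab =>
        refine ⟨he, fun x y hxy => ?_⟩
        rcases hxy with ⟨rfl, rfl⟩ | ⟨rfl, rfl⟩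
        · exact hab
        · exact hab.symm
  | star χ1 χ2 ih1 ih2 =>
      intro S hq h
      cases h with | star hd h1 h2 =>
        obtain ⟨e1, f1⟩ := ih1 hq.1 h1
        obtain ⟨e2, f2⟩ := ih2 hq.2 h2
        refine ⟨empS_comp e1 e2, fun x y hxy => ?_⟩
        rcases hxy with h' | h'
        · exact f1 _ _ h'
        · exact f2 _ _ h'
  | ne a b => exact fun hq _ => hq.elim
  | rel r a => exact fun hq _ => hq.elim
  | pred A a => exact fun hq _ => hq.elim
  | ex z χ ih => exact fun hq _ => hq.elim

lemma csat_congr {s1 s2 : ℕ → V} :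
    ∀ {χ : SLR Rel ar Pr pa}, (∀ x ∈ χ.fv, s1 x = s2 x) → Csat V χ s1 → Csat V χ s2 := by
  intro χ
  induction χ with
  | emp => exact fun _ _ => trivial
  | eq x y =>
      intro hag h
      show s2 x = s2 y
      rw [← hag x (Set.mem_insert _ _), ← hag y (Set.mem_insert_of_mem _ rfl)]
      exact h
  | ne x y =>
      intro hag h
      show s2 x ≠ s2 y
      rw [← hag x (Set.mem_insert _ _), ← hag y (Set.mem_insert_of_mem _ rfl)]
      exact h
  | rel r a => exact fun _ _ => trivial
  | pred A a => exact fun _ h => h.elim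
  | star χ1 χ2 ih1 ih2 =>
      intro hag h
      refine ⟨ih1 (fun x hx => hag x (Set.mem_union_left _ hx)) h.1,
        ih2 (fun x hx => hag x (Set.mem_union_right _ hx)) h.2.1, ?_⟩
      have hd := h.2.2
      rwa [strOf_congr (fun x hx => hag x (Set.mem_union_left _ hx)),
        strOf_congr (fun x hx => hag x (Set.mem_union_right _ hx))] at hd
  | ex z χ ih => exact fun _ h => h.elim

lemma sat_congr {Δ : SID Rel ar Pr pa} {s1 s2 : ℕ → V} {χ : SLR Rel ar Pr pa}
    {S : Str Rel ar V} (hq : χ.QPF) (h : Sat Δ S s1 χ)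
    (hag : ∀ x ∈ χ.fv, s1 x = s2 x) : Sat Δ S s2 χ := by
  obtain ⟨hS, hc⟩ := sat_strOf_csat hq h
  rw [hS, strOf_congr hag]
  exact sat_of_csat hq (csat_congr hag hc)

lemma csat_transfer {s1 s2 : ℕ → V} :
    ∀ {χ : SLR Rel ar Pr pa}, χ.QPF → Csat V χ s1 →
      (∀ x ∈ χ.fv, ∀ y ∈ χ.fv, s2 x = s2 y → s1 x = s1 y) →
      (∀ x y, χ.eqOccurs x y → s2 x = s2 y) → Csat V χ s2 := by
  intro χ
  induction χ with
  | emp => exact fun _ _ _ _ => trivial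
  | eq x y => exact fun _ _ _ heq => heq x y (Or.inl ⟨rfl, rfl⟩)
  | ne x y =>
      intro _ h hf _
      show s2 x ≠ s2 y
      intro hcon
      exact h (hf x (Set.mem_insert _ _) y (Set.mem_insert_of_mem _ rfl) hcon)
  | rel r a => exact fun _ _ _ _ => trivial
  | pred A a => exact fun hq => hq.elim
  | ex z χ ih => exact fun hq => hq.elim
  | star χ1 χ2 ih1 ih2 =>
      intro hq h hf heq
      classical
      refine ⟨ih1 hq.1 h.1 (fun x hx y hy => hf x (Set.mem_union_left _ hx)
          y (Set.mem_union_left _ hy)) (fun x y he => heq x y (Or.inl he)),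
        ih2 hq.2 h.2.1 (fun x hx y hy => hf x (Set.mem_union_right _ hx)
          y (Set.mem_union_right _ hy)) (fun x y he => heq x y (Or.inr he)), ?_⟩
      set g : V → V :=
        fun v => if hg : ∃ x, x ∈ (SLR.star χ1 χ2).fv ∧ s2 x = v then s1 hg.choose else v
        with hgdef
      have hgs : ∀ x ∈ (SLR.star χ1 χ2).fv, g (s2 x) = s1 x := by
        intro x hx
        have hg : ∃ y, y ∈ (SLR.star χ1 χ2).fv ∧ s2 y = s2 x := ⟨x, hx, rfl⟩
        rw [hgdef]
        simp only
        rw [dif_pos hg]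
        exact hf hg.choose hg.choose_spec.1 x hx hg.choose_spec.2
      have e1 : strOf χ1 s1 = mapStr g (strOf χ1 s2) := by
        rw [mapStr_strOf]
        exact strOf_congr fun x hx => (hgs x (Set.mem_union_left _ hx)).symm
      have e2 : strOf χ2 s1 = mapStr g (strOf χ2 s2) := by
        rw [mapStr_strOf]
        exact strOf_congr fun x hx => (hgs x (Set.mem_union_right _ hx)).symm
      intro r
      rw [Set.eq_empty_iff_forall_notMem]
      rintro t ⟨ht1, ht2⟩
      have hm1 : (fun i => g (t i)) ∈ (strOf χ1 s1).interp r := by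
        rw [e1]
        exact ⟨t, ht1, rfl⟩
      have hm2 : (fun i => g (t i)) ∈ (strOf χ2 s1).interp r := by
        rw [e2]
        exact ⟨t, ht2, rfl⟩
      have hd := h.2.2 r
      rw [Set.eq_empty_iff_forall_notMem] at hd
      exact hd _ ⟨hm1, hm2⟩

lemma fv_finite : ∀ χ : SLR Rel ar Pr pa, χ.fv.Finite
  | .emp => Set.finite_empty
  | .eq x y => (Set.finite_singleton y).insert x
  | .ne x y => (Set.finite_singleton y).insert x
  | .rel _ a => Set.finite_range a
  | .pred _ a => Set.finite_range a
  | .star χ1 χ2 => (fv_finite χ1).union (fv_finite χ2)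
  | .ex _ χ => (fv_finite χ).diff

lemma supp_finite (S : Str Rel ar V) : S.supp.Finite := by
  have hsub : S.supp ⊆ ⋃ r ∈ {r : Rel | S.interp r ≠ ∅}, ⋃ t ∈ S.interp r, Set.range t := by
    rintro u ⟨r, t, ht, i, hi⟩
    exact Set.mem_biUnion (Set.nonempty_iff_ne_empty.mp ⟨t, ht⟩)
      (Set.mem_biUnion ht ⟨i, hi⟩)
  refine Set.Finite.subset ?_ hsub
  refine Set.Finite.biUnion S.finite_active fun r _ => ?_
  exact Set.Finite.biUnion (S.finite_interp r) fun t _ => Set.finite_range t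

lemma supp_sub {S1 S2 : Str Rel ar V} (h : ∀ r, S1.interp r ⊆ S2.interp r) :
    S1.supp ⊆ S2.supp := by
  rintro u ⟨r, t, ht, i, hi⟩
  exact ⟨r, t, h r ht, i, hi⟩

lemma supp_mapStr (g : V → V) (S : Str Rel ar V) : (mapStr g S).supp ⊆ g '' S.supp := by
  rintro u ⟨r, t, ht, i, hi⟩
  obtain ⟨t0, ht0, rfl⟩ := ht
  exact ⟨t0 i, ⟨r, t0, ht0, i, rfl⟩, hi⟩

lemma supp_strOf {χ : SLR Rel ar Pr pa} {s : ℕ → V} :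
    (strOf χ s).supp ⊆ s '' χ.fv := by
  rintro u ⟨r, t, ht, i, hi⟩
  obtain ⟨a, hfv, rfl, -⟩ := mem_strOf ht
  exact ⟨a i, hfv i, hi⟩

lemma connected_of_subsingleton {α : Type} (G : SimpleGraph α) [Subsingleton α]
    [Nonempty α] : G.Connected := by
  constructor
  intro a b
  rw [Subsingleton.elim a b]

/-- The one-node tree decomposition. -/
noncomputable def trivDecomp (S : Str Rel ar V) : TreeDecomp S where
  ι := PUnit
  instFin := inferInstance
  G := ⊥
  isTree := ⟨connected_of_subsingleton _, SimpleGraph.isAcyclic_bot⟩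
  bag _ := (supp_finite S).toFinset
  bag_cover r t ht :=
    ⟨PUnit.unit, fun i => (supp_finite S).mem_toFinset.mpr ⟨r, t, ht, i, rfl⟩⟩
  bag_conn u hu := by
    haveI : Nonempty {n : PUnit | u ∈ (supp_finite S).toFinset} :=
      ⟨⟨PUnit.unit, (supp_finite S).mem_toFinset.mpr hu⟩⟩
    exact connected_of_subsingleton _

lemma tw_le_width {S : Str Rel ar V} (T : TreeDecomp S) : tw S ≤ T.width :=
  Nat.sInf_le ⟨T, rfl⟩

lemma exists_width (S : Str Rel ar V) : ∃ T : TreeDecomp S, T.width = tw S := by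
  have h : {w | ∃ T : TreeDecomp S, T.width = w}.Nonempty :=
    ⟨(trivDecomp S).width, trivDecomp S, rfl⟩
  exact Nat.sInf_mem h

lemma tw_mapStr_le {S' Sbig : Str Rel ar V} {g : V → V} {K : Set V} (hKfin : K.Finite)
    (hsub : ∀ r, S'.interp r ⊆ Sbig.interp r)
    (hinj : ∀ u ∈ S'.supp, ∀ v ∈ S'.supp, g u = g v → u = v ∨ g u ∈ K) :
    tw (mapStr g S') ≤ tw Sbig + K.ncard := by
  classical
  obtain ⟨T, hT⟩ := exists_width Sbig
  set D : Finset V := (supp_finite S').toFinset with hD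
  set Kf : Finset V := hKfin.toFinset with hKf
  have hcov : ∀ (r : Rel), ∀ t ∈ (mapStr g S').interp r,
      ∃ n : T.ι, ∀ i, t i ∈ (T.bag n ∩ D).image g ∪ Kf := by
    intro r t ht
    obtain ⟨t0, ht0, rfl⟩ := ht
    obtain ⟨n, hn⟩ := T.bag_cover r t0 (hsub r ht0)
    refine ⟨n, fun i => ?_⟩
    refine Finset.mem_union_left _ ?_
    refine Finset.mem_image.mpr ⟨t0 i, Finset.mem_inter.mpr ⟨hn i, ?_⟩, rfl⟩
    exact (supp_finite S').mem_toFinset.mpr ⟨r, t0, ht0, i, rfl⟩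
  have hconn : ∀ u ∈ (mapStr g S').supp,
      (SimpleGraph.induce {n : T.ι | u ∈ (T.bag n ∩ D).image g ∪ Kf} T.G).Connected := by
    intro w hw
    obtain ⟨u, hu, rfl⟩ := supp_mapStr g S' hw
    by_cases hwK : g u ∈ K
    · have huniv : {n : T.ι | g u ∈ (T.bag n ∩ D).image g ∪ Kf} = Set.univ :=
        Set.eq_univ_of_forall fun n =>
          Finset.mem_union_right _ (hKfin.mem_toFinset.mpr hwK)
      rw [huniv]
      exact (SimpleGraph.Iso.connected_iff (SimpleGraph.induceUnivIso T.G)).mpr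
        T.isTree.isConnected
    · have hset : {n : T.ι | g u ∈ (T.bag n ∩ D).image g ∪ Kf} = {n : T.ι | u ∈ T.bag n} := by
        ext n
        simp only [Set.mem_setOf_eq, Finset.mem_union, Finset.mem_image, Finset.mem_inter]
        constructor
        · rintro (⟨v, ⟨hv1, hv2⟩, hv3⟩ | hK)
          · have hvs : v ∈ S'.supp := (supp_finite S').mem_toFinset.mp hv2
            rcases hinj v hvs u hu hv3 with rfl | hbad
            · exact hv1
            · exact absurd (hv3 ▸ hbad) hwK
          · exact absurd (hKfin.mem_toFinset.mp hK) hwK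
        · intro hn
          exact Or.inl ⟨u, ⟨hn, (supp_finite S').mem_toFinset.mpr hu⟩, rfl⟩
      rw [hset]
      exact T.bag_conn u (supp_sub hsub hu)
  have hle := tw_le_width (S := mapStr g S')
    ⟨T.ι, T.instFin, T.G, T.isTree, fun n => (T.bag n ∩ D).image g ∪ Kf, hcov, hconn⟩
  refine le_trans hle ?_
  show (Finset.univ.sup fun n : T.ι => ((T.bag n ∩ D).image g ∪ Kf).card) - 1
    ≤ tw Sbig + K.ncard
  have hcard : ∀ n : T.ι, ((T.bag n ∩ D).image g ∪ Kf).card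
      ≤ (Finset.univ.sup fun m : T.ι => (T.bag m).card) + K.ncard := by
    intro n
    have h0 : ((T.bag n ∩ D).image g ∪ Kf).card
        ≤ ((T.bag n ∩ D).image g).card + Kf.card := Finset.card_union_le _ _
    have h1 : ((T.bag n ∩ D).image g).card ≤ (T.bag n).card :=
      le_trans Finset.card_image_le (Finset.card_le_card Finset.inter_subset_left)
    have h2 : Kf.card = K.ncard := (Set.ncard_eq_toFinset_card K hKfin).symm
    have h3 : (T.bag n).card ≤ Finset.univ.sup fun m : T.ι => (T.bag m).card :=
      Finset.le_sup (f := fun m : T.ι => (T.bag m).card) (Finset.mem_univ n)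
    omega
  have hsup : (Finset.univ.sup fun n : T.ι => ((T.bag n ∩ D).image g ∪ Kf).card)
      ≤ (Finset.univ.sup fun m : T.ι => (T.bag m).card) + K.ncard :=
    Finset.sup_le fun n _ => hcard n
  have hT' : (Finset.univ.sup fun m : T.ι => (T.bag m).card) - 1 = tw Sbig := hT
  omega

end AuxTW

/-- Lemma 2.11: replacing `ψ` by the conjunction `η` of the equalities
between common free variables entailed by `ψ` increases the treewidth of the models of
the existential closure by at most the number of common free variables. -/
theorem sep_treewidth
    (Rel : Type) [Fintype Rel] (ar : Rel → ℕ) (har : ∀ r, 1 ≤ ar r)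
    (V : Type) [Infinite V] (Pr : Type) (pa : Pr → ℕ) (Δ : SID Rel ar Pr pa)
    (φ ψ η : SLR Rel ar Pr pa) (hφ : φ.QPF) (hψ : ψ.QPF)
    (hsat : ∃ (S : Str Rel ar V) (s : ℕ → V), Sat Δ S s (.star φ ψ))
    (hnc : ∀ x ∈ φ.fv ∩ ψ.fv, ∀ y ∈ φ.fv ∩ ψ.fv, x ≠ y → ¬ EqConseq (V := V) Δ φ x y)
    (hη1 : η.EqOnly)
    (hη2 : ∀ x y : ℕ, η.eqOccurs x y ↔
      (x ∈ φ.fv ∩ ψ.fv ∧ y ∈ φ.fv ∩ ψ.fv ∧ EqConseq (V := V) Δ ψ x y)) :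
    twSet (SMod (V := V) Δ (.star φ η)) ≤
      twSet (SMod (V := V) Δ (.star φ ψ)) + (((φ.fv ∩ ψ.fv).ncard : ℕ) : ℕ∞) := by
  classical
  obtain ⟨S0, s0, hS0⟩ := hsat
  cases hS0 with
  | @star S1 S2 _ _ _ hd0 h1 h2 =>
  obtain ⟨hS1, hCphi0⟩ := sat_strOf_csat hφ h1
  obtain ⟨hS2, hCpsi0⟩ := sat_strOf_csat hψ h2
  subst hS1; subst hS2
  -- a pairing bijection on V
  have hcard : Cardinal.mk (V × V) = Cardinal.mk V := by
    rw [Cardinal.mk_prod]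
    simpa using Cardinal.mul_eq_self (Cardinal.aleph0_le_mk V)
  obtain ⟨ep⟩ := Cardinal.eq.mp hcard
  obtain ⟨v0, v1, hv01⟩ := exists_pair_ne V
  unfold twSet
  refine iSup₂_le fun S hS => ?_
  obtain ⟨s, hSsat⟩ := hS
  cases hSsat with
  | @star Sa Sb _ _ _ hdS hA hB =>
  obtain ⟨hSaeq, hCphis⟩ := sat_strOf_csat hφ hA
  obtain ⟨hEmp, hetaeq⟩ := eqOnly_sat hη1 hB
  subst hSaeq
  set F : Set ℕ := φ.fv ∩ ψ.fv with hF
  have satphis : Sat Δ (strOf φ s) s φ := hA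
  have satphi0 : Sat Δ (strOf φ s0) s0 φ := h1
  have satpsi0 : Sat Δ (strOf ψ s0) s0 ψ := h2
  have Ephis : ∀ {x y : ℕ}, EqConseq (V := V) Δ φ x y → s x = s y :=
    fun hc => hc _ _ satphis
  have Ephi0 : ∀ {x y : ℕ}, EqConseq (V := V) Δ φ x y → s0 x = s0 y :=
    fun hc => hc _ _ satphi0
  have Epsi0 : ∀ {x y : ℕ}, EqConseq (V := V) Δ ψ x y → s0 x = s0 y :=
    fun hc => hc _ _ satpsi0
  have hpsiF : ∀ u v, u ∈ F → v ∈ F → EqConseq (V := V) Δ ψ u v → s u = s v :=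
    fun u v hu hv hc => hetaeq u v ((hη2 u v).mpr ⟨hu, hv, hc⟩)
  have hNF : ∀ u v, u ∈ ψ.fv → v ∉ ψ.fv → ¬ EqConseq (V := V) Δ ψ u v := by
    intro u v hu hv hc
    have hne : u ≠ v := fun h => hv (h ▸ hu)
    obtain ⟨w, hw⟩ := exists_ne (s0 u)
    have hsat' : Sat Δ (strOf ψ s0) (Function.update s0 v w) ψ :=
      sat_congr hψ satpsi0
        (fun x hx => (Function.update_of_ne (fun h : x = v => hv (h ▸ hx)) w s0).symm)
    have hcc := hc _ _ hsat'
    rw [Function.update_of_ne hne, Function.update_self] at hcc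
    exact hw hcc.symm
  -- the two component stores
  set B : ℕ → V := fun v =>
    if hb : ∃ u, u ∈ F ∧ EqConseq (V := V) Δ ψ u v then s hb.choose
    else if v ∈ φ.fv then s v else v0 with hBdef
  have hBs : ∀ v ∈ φ.fv, B v = s v := by
    intro v hv
    rw [hBdef]
    simp only
    by_cases hb : ∃ u, u ∈ F ∧ EqConseq (V := V) Δ ψ u v
    · rw [dif_pos hb]
      by_cases hvψ : v ∈ ψ.fv
      · exact hpsiF _ _ hb.choose_spec.1 ⟨hv, hvψ⟩ hb.choose_spec.2
      · exact absurd hb.choose_spec.2 (hNF _ _ hb.choose_spec.1.2 hvψ)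
    · rw [dif_neg hb, if_pos hv]
  have hBeq : ∀ x y, ψ.eqOccurs x y → B x = B y := by
    intro x y he
    have hc := eqOccurs_conseq (V := V) (Δ := Δ) hψ he
    obtain ⟨hx, hy⟩ := eqOccurs_mem_fv hψ he
    rw [hBdef]
    simp only
    by_cases hbx : ∃ u, u ∈ F ∧ EqConseq (V := V) Δ ψ u x
    · have hby : ∃ u, u ∈ F ∧ EqConseq (V := V) Δ ψ u y :=
        ⟨hbx.choose, hbx.choose_spec.1,
          fun Sx sx hSx => (hbx.choose_spec.2 Sx sx hSx).trans (hc Sx sx hSx)⟩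
      rw [dif_pos hbx, dif_pos hby]
      refine hpsiF _ _ hbx.choose_spec.1 hby.choose_spec.1 ?_
      exact fun Sx sx hSx => ((hbx.choose_spec.2 Sx sx hSx).trans (hc Sx sx hSx)).trans
        (hby.choose_spec.2 Sx sx hSx).symm
    · have hby : ¬ ∃ u, u ∈ F ∧ EqConseq (V := V) Δ ψ u y := by
        rintro ⟨u, huF, huc⟩
        exact hbx ⟨u, huF, fun Sx sx hSx => (huc Sx sx hSx).trans (hc Sx sx hSx).symm⟩
      have hxφ : x ∉ φ.fv := fun hxφ => hbx ⟨x, ⟨hxφ, hx⟩, fun _ _ _ => rfl⟩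
      have hyφ : y ∉ φ.fv := fun hyφ => hby ⟨y, ⟨hyφ, hy⟩, fun _ _ _ => rfl⟩
      rw [dif_neg hbx, dif_neg hby, if_neg hxφ, if_neg hyφ]
  set A : ℕ → V := fun v =>
    if v ∈ ψ.fv then ep (s0 v, v0)
    else if ha : ∃ u, u ∈ F ∧ EqConseq (V := V) Δ φ u v then ep (s0 ha.choose, v0)
    else ep (s v, v1) with hAdef
  have hA0 : ∀ v, (v ∈ ψ.fv ∨ ∃ u, u ∈ F ∧ EqConseq (V := V) Δ φ u v) →
      A v = ep (s0 v, v0) := by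
    intro v hv
    rw [hAdef]
    simp only
    by_cases hvψ : v ∈ ψ.fv
    · rw [if_pos hvψ]
    · rcases hv with hv | hv
      · exact absurd hv hvψ
      · rw [if_neg hvψ, dif_pos hv, Ephi0 hv.choose_spec.2]
  have hA1 : ∀ v, v ∉ ψ.fv → ¬ (∃ u, u ∈ F ∧ EqConseq (V := V) Δ φ u v) →
      A v = ep (s v, v1) := by
    intro v hv1 hv2
    rw [hAdef]
    simp only
    rw [if_neg hv1, dif_neg hv2]
  have hAeqφ : ∀ x y, φ.eqOccurs x y → A x = A y := by
    intro x y he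
    have hc := eqOccurs_conseq (V := V) (Δ := Δ) hφ he
    obtain ⟨hx, hy⟩ := eqOccurs_mem_fv hφ he
    by_cases px : x ∈ ψ.fv ∨ ∃ u, u ∈ F ∧ EqConseq (V := V) Δ φ u x
    · have py : y ∈ ψ.fv ∨ ∃ u, u ∈ F ∧ EqConseq (V := V) Δ φ u y := by
        rcases px with hxψ | ⟨u, huF, huc⟩
        · exact Or.inr ⟨x, ⟨hx, hxψ⟩, hc⟩
        · exact Or.inr ⟨u, huF, fun Sx sx hSx => (huc Sx sx hSx).trans (hc Sx sx hSx)⟩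
      rw [hA0 x px, hA0 y py, Ephi0 hc]
    · have py : ¬ (y ∈ ψ.fv ∨ ∃ u, u ∈ F ∧ EqConseq (V := V) Δ φ u y) := by
        rintro (hyψ | ⟨u, huF, huc⟩)
        · exact px (Or.inr ⟨y, ⟨hy, hyψ⟩, fun Sx sx hSx => (hc Sx sx hSx).symm⟩)
        · exact px (Or.inr ⟨u, huF,
            fun Sx sx hSx => (huc Sx sx hSx).trans (hc Sx sx hSx).symm⟩)
      have px1 : x ∉ ψ.fv := fun h => px (Or.inl h)
      have px2 : ¬ ∃ u, u ∈ F ∧ EqConseq (V := V) Δ φ u x := fun h => px (Or.inr h)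
      have py1 : y ∉ ψ.fv := fun h => py (Or.inl h)
      have py2 : ¬ ∃ u, u ∈ F ∧ EqConseq (V := V) Δ φ u y := fun h => py (Or.inr h)
      rw [hA1 x px1 px2, hA1 y py1 py2, Ephis hc]
  set sst : ℕ → V := fun v => ep (A v, B v) with hsstdef
  have hst_inj : ∀ x y, sst x = sst y → A x = A y ∧ B x = B y := by
    intro x y h
    have := ep.injective h
    exact ⟨congrArg Prod.fst this, congrArg Prod.snd this⟩
  have hfineφ : ∀ x ∈ φ.fv, ∀ y ∈ φ.fv, sst x = sst y → s x = s y := by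
    intro x hx y hy h
    rw [← hBs x hx, ← hBs y hy]
    exact (hst_inj x y h).2
  have hfineψ : ∀ x ∈ ψ.fv, ∀ y ∈ ψ.fv, sst x = sst y → s0 x = s0 y := by
    intro x hx y hy h
    have hAxy := (hst_inj x y h).1
    rw [hA0 x (Or.inl hx), hA0 y (Or.inl hy)] at hAxy
    exact congrArg Prod.fst (ep.injective hAxy)
  have hCphist : Csat V φ sst := by
    refine csat_transfer hφ hCphis hfineφ ?_
    intro x y he
    obtain ⟨hx, hy⟩ := eqOccurs_mem_fv hφ he
    show ep (A x, B x) = ep (A y, B y)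
    rw [hAeqφ x y he, hBs x hx, hBs y hy, Ephis (eqOccurs_conseq hφ he)]
  have hCpsist : Csat V ψ sst := by
    refine csat_transfer hψ hCpsi0 hfineψ ?_
    intro x y he
    obtain ⟨hx, hy⟩ := eqOccurs_mem_fv hψ he
    show ep (A x, B x) = ep (A y, B y)
    rw [hA0 x (Or.inl hx), hA0 y (Or.inl hy), hBeq x y he,
      Epsi0 (eqOccurs_conseq hψ he)]
  -- local disjointness of the two parts
  set gA : V → V := fun v => if hg : ∃ x, sst x = v then A hg.choose else v with hgAdef
  have hgAs : ∀ v, gA (sst v) = A v := by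
    intro v
    have hg : ∃ x, sst x = sst v := ⟨v, rfl⟩
    rw [hgAdef]
    simp only
    rw [dif_pos hg]
    exact (hst_inj _ _ hg.choose_spec).1
  have hdisj : LocDisj (strOf (V := V) φ sst) (strOf ψ sst) := by
    intro r
    rw [Set.eq_empty_iff_forall_notMem]
    rintro t ⟨ht1, ht2⟩
    obtain ⟨a, hafv, hta, hamem⟩ := mem_strOf ht1
    obtain ⟨b, hbfv, htb, hbmem⟩ := mem_strOf ht2
    have hABi : ∀ i, A (a i) = A (b i) := by
      intro i
      have h' : sst (a i) = sst (b i) := by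
        rw [← congrFun hta i, ← congrFun htb i]
      exact (hst_inj _ _ h').1
    by_cases hall : ∀ i, A (a i) = ep (s0 (a i), v0)
    · have hab : ∀ i, s0 (a i) = s0 (b i) := by
        intro i
        have h1 := hABi i
        rw [hall i, hA0 (b i) (Or.inl (hbfv i))] at h1
        exact congrArg Prod.fst (ep.injective h1)
      have hma : (fun i => s0 (a i)) ∈ (strOf φ s0).interp r := hamem s0
      have hmb : (fun i => s0 (b i)) ∈ (strOf ψ s0).interp r := hbmem s0
      have heqab : (fun i => s0 (a i)) = (fun i => s0 (b i)) := funext hab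
      have hd := hd0 r
      rw [Set.eq_empty_iff_forall_notMem] at hd
      exact hd _ ⟨hma, heqab ▸ hmb⟩
    · push_neg at hall
      obtain ⟨i, hi⟩ := hall
      by_cases hiψ : a i ∈ ψ.fv
      · exact hi (hA0 (a i) (Or.inl hiψ))
      · by_cases hip : ∃ u, u ∈ F ∧ EqConseq (V := V) Δ φ u (a i)
        · exact hi (hA0 (a i) (Or.inr hip))
        · have h1 := hABi i
          rw [hA1 (a i) hiψ hip, hA0 (b i) (Or.inl (hbfv i))] at h1
          exact hv01 (congrArg Prod.snd (ep.injective h1)).symm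
  have hsatstar : ((strOf (V := V) φ sst).comp (strOf ψ sst)) ∈
      SMod (V := V) Δ (.star φ ψ) :=
    ⟨sst, Sat.star hdisj (sat_of_csat hφ hCphist) (sat_of_csat hψ hCpsist)⟩
  -- the merging map
  set gH : V → V := fun v =>
    if hh : ∃ x, x ∈ φ.fv ∧ sst x = v then s hh.choose else v with hgHdef
  have hgHs : ∀ v ∈ φ.fv, gH (sst v) = s v := by
    intro v hv
    have hh : ∃ x, x ∈ φ.fv ∧ sst x = sst v := ⟨v, hv, rfl⟩
    rw [hgHdef]
    simp only
    rw [dif_pos hh]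
    exact hfineφ _ hh.choose_spec.1 _ hv hh.choose_spec.2
  have hmapH : mapStr gH (strOf (V := V) φ sst) = strOf φ s := by
    rw [mapStr_strOf]
    exact (strOf_congr fun x hx => (hgHs x hx).symm).symm
  have hSS : (strOf (V := V) φ s).comp Sb = strOf φ s := by
    refine Str.ext' fun r => ?_
    show (strOf φ s).interp r ∪ Sb.interp r = _
    rw [hEmp r, Set.union_empty]
  rw [hSS, ← hmapH]
  have hFfin : F.Finite := (fv_finite φ).inter_of_left _
  have hKfin : (s '' F).Finite := hFfin.image s
  have hsub : ∀ r, (strOf (V := V) φ sst).interp r ⊆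
      ((strOf (V := V) φ sst).comp (strOf ψ sst)).interp r :=
    fun r => Set.subset_union_left
  have hinj : ∀ u ∈ (strOf (V := V) φ sst).supp, ∀ v ∈ (strOf (V := V) φ sst).supp,
      gH u = gH v → u = v ∨ gH u ∈ s '' F := by
    intro u hu v hv hguv
    obtain ⟨x, hx, rfl⟩ := supp_strOf hu
    obtain ⟨y, hy, rfl⟩ := supp_strOf hv
    rw [hgHs x hx, hgHs y hy] at hguv
    by_cases hK : s x ∈ s '' F
    · right
      rw [hgHs x hx]
      exact hK
    · left
      have hAx : A x = ep (s x, v1) := by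
        by_cases hxψ : x ∈ ψ.fv
        · exact absurd ⟨x, ⟨hx, hxψ⟩, rfl⟩ hK
        · by_cases hxp : ∃ u', u' ∈ F ∧ EqConseq (V := V) Δ φ u' x
          · exact absurd ⟨hxp.choose, hxp.choose_spec.1, Ephis hxp.choose_spec.2⟩ hK
          · exact hA1 x hxψ hxp
      have hKy : s y ∉ s '' F := by
        rw [← hguv]
        exact hK
      have hAy : A y = ep (s y, v1) := by
        by_cases hyψ : y ∈ ψ.fv
        · exact absurd ⟨y, ⟨hy, hyψ⟩, rfl⟩ hKy
        · by_cases hyp : ∃ u', u' ∈ F ∧ EqConseq (V := V) Δ φ u' y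
          · exact absurd ⟨hyp.choose, hyp.choose_spec.1, Ephis hyp.choose_spec.2⟩ hKy
          · exact hA1 y hyψ hyp
      show ep (A x, B x) = ep (A y, B y)
      rw [hAx, hAy, hBs x hx, hBs y hy, hguv]
  have hstep : tw (mapStr gH (strOf (V := V) φ sst)) ≤
      tw ((strOf (V := V) φ sst).comp (strOf ψ sst)) + (s '' F).ncard :=
    tw_mapStr_le hKfin hsub hinj
  have himg : (s '' F).ncard ≤ F.ncard := Set.ncard_image_le hFfin
  have hnat : tw (mapStr gH (strOf (V := V) φ sst)) ≤
      tw ((strOf (V := V) φ sst).comp (strOf ψ sst)) + F.ncard := by omega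
  calc (tw (mapStr gH (strOf (V := V) φ sst)) : ℕ∞)
      ≤ ((tw ((strOf (V := V) φ sst).comp (strOf ψ sst)) + F.ncard : ℕ) : ℕ∞) := by
        exact_mod_cast hnat
    _ = (tw ((strOf (V := V) φ sst).comp (strOf ψ sst)) : ℕ∞) + (F.ncard : ℕ∞) := by
        push_cast
        rfl
    _ ≤ (⨆ S ∈ SMod (V := V) Δ (.star φ ψ), (tw S : ℕ∞)) + (F.ncard : ℕ∞) := by
        refine add_le_add_left ?_ _
        exact le_iSup₂ (f := fun (S : Str Rel ar V)
          (_ : S ∈ SMod (V := V) Δ (.star φ ψ)) => (tw S : ℕ∞)) _ hsatstar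


end SLRTW
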